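/- Let h : Q → P be an injective, integral homomorphism of sharp, cancellative additive commutative monoids and let f : Q → R be any homomorphism to a sharp, cancellative additive commutative monoid R. Then the pushout P ⊕_Q R of h and f in the category of additive commutative monoids is the quotient of the direct sum P ⊕ R by the monoid congruence ∼, where (p, r) ∼ (p', r') if and only if there exist q, q' ∈ Q with p + h(q) = p' + h(q') and r + f(q') = r' + f(q). In particular, the canonical map P ⊕ R → P ⊕_Q R is surjective and identifies (p, r) with (p', r') exactly when this condition holds. -/

import Mathlib

/-- A (additive commutative) monoid is sharp if `x + y = 0` implies `x = 0`. -/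
def Sharp (M : Type*) [AddCommMonoid M] : Prop :=
  ∀ x y : M, x + y = 0 → x = 0

/-- A monoid is cancellative if `a + c = b + c` implies `a = b`. -/
def Cancellative (M : Type*) [AddCommMonoid M] : Prop :=
  ∀ a b c : M, a + c = b + c → a = b

/-- A monoid homomorphism `h : Q →+ P` is integral if whenever
`p1 + h q1 = p2 + h q2` there are `q3, q4, p` with `p1 = p + h q4`,
`p2 = p + h q3` and `q1 + q4 = q2 + q3`. -/
def IntegralHom {Q P : Type*} [AddCommMonoid Q] [AddCommMonoid P] (h : Q →+ P) : Prop :=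
  ∀ (q1 q2 : Q) (p1 p2 : P), p1 + h q1 = p2 + h q2 →
    ∃ (q3 q4 : Q) (p : P), p1 = p + h q4 ∧ p2 = p + h q3 ∧ q1 + q4 = q2 + q3

/-- An element `p` of `P` is `Q`-primitive (relative to `h : Q →+ P`) if whenever
`p = p' + h q` one has `q = 0`. -/
def QPrimitive {Q P : Type*} [AddCommMonoid Q] [AddCommMonoid P] (h : Q →+ P) (p : P) : Prop :=
  ∀ (p' : P) (q : Q), p = p' + h q → q = 0

/-- Membership in the ideal `I_Q = {h q + p : q ∈ Q, q ≠ 0, p ∈ P}`. -/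
def MemIQ {Q P : Type*} [AddCommMonoid Q] [AddCommMonoid P] (h : Q →+ P) (p : P) : Prop :=
  ∃ q : Q, q ≠ 0 ∧ ∃ p' : P, p = h q + p'

/-- `h` is without nilpotents if `n • p ∈ I_Q` for some `n ≥ 1` implies `p ∈ I_Q`. -/
def WithoutNilpotents {Q P : Type*} [AddCommMonoid Q] [AddCommMonoid P] (h : Q →+ P) : Prop :=
  ∀ (p : P) (n : ℕ), 1 ≤ n → MemIQ h (n • p) → MemIQ h p

/-- The congruence on `P` identifying `p ∼ p'` iff `p + h q = p' + h q'` for some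
`q, q' ∈ Q`; the quotient monoid `P/Q` is its quotient. -/
def quotCon {Q P : Type*} [AddCommMonoid Q] [AddCommMonoid P] (h : Q →+ P) : AddCon P where
  r p p' := ∃ q q' : Q, p + h q = p' + h q'
  iseqv := by
    constructor
    · exact fun p => ⟨0, 0, rfl⟩
    · rintro p p' ⟨q, q', e⟩; exact ⟨q', q, e.symm⟩
    · rintro p p' p'' ⟨q, q', e1⟩ ⟨s, s', e2⟩
      refine ⟨q + s, s' + q', ?_⟩
      calc p + h (q + s) = (p + h q) + h s := by rw [map_add, add_assoc]
        _ = (p' + h q') + h s := by rw [e1]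
        _ = (p' + h s) + h q' := add_right_comm _ _ _
        _ = (p'' + h s') + h q' := by rw [e2]
        _ = p'' + h (s' + q') := by rw [map_add, add_assoc]
  add' := by
    rintro a b c d ⟨q1, q1', e1⟩ ⟨q2, q2', e2⟩
    refine ⟨q1 + q2, q1' + q2', ?_⟩
    calc (a + c) + h (q1 + q2) = (a + h q1) + (c + h q2) := by
          rw [map_add]; exact add_add_add_comm _ _ _ _
      _ = (b + h q1') + (d + h q2') := by rw [e1, e2]
      _ = (b + d) + h (q1' + q2') := by rw [map_add]; exact (add_add_add_comm _ _ _ _).symm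

/-- A monoid is saturated if it is cancellative and whenever `n • a = n • b + p`
for some `n ≥ 1` there is `p'` with `a = b + p'`. -/
def Saturated (M : Type*) [AddCommMonoid M] : Prop :=
  Cancellative M ∧ ∀ (a b p : M) (n : ℕ), 1 ≤ n → n • a = n • b + p → ∃ p' : M, a = b + p'

/-- The congruence on `P × R` generated by `(h q, 0) ∼ (0, f q)`, whose quotient is
the pushout `P ⊕_Q R` in the category of additive commutative monoids. -/
def pushCon {Q P R : Type*} [AddCommMonoid Q] [AddCommMonoid P] [AddCommMonoid R]
    (h : Q →+ P) (f : Q →+ R) : AddCon (P × R) :=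
  addConGen (fun a b => ∃ q : Q, a = (h q, 0) ∧ b = ((0 : P), f q))

/-- The explicit relation is an additive congruence. -/
def expCon {Q P R : Type*} [AddCommMonoid Q] [AddCommMonoid P] [AddCommMonoid R]
    (h : Q →+ P) (f : Q →+ R) : AddCon (P × R) where
  r a b := ∃ q q' : Q, a.1 + h q = b.1 + h q' ∧ a.2 + f q' = b.2 + f q
  iseqv := by
    constructor
    · exact fun a => ⟨0, 0, rfl, rfl⟩
    · rintro a b ⟨q, q', e1, e2⟩; exact ⟨q', q, e1.symm, e2.symm⟩
    · rintro a b c ⟨q1, q1', e1, e2⟩ ⟨q2, q2', e3, e4⟩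
      refine ⟨q1 + q2, q2' + q1', ?_, ?_⟩
      · calc a.1 + h (q1 + q2) = (a.1 + h q1) + h q2 := by rw [map_add, add_assoc]
          _ = (b.1 + h q2) + h q1' := by rw [e1, add_right_comm]
          _ = (c.1 + h q2') + h q1' := by rw [e3]
          _ = c.1 + h (q2' + q1') := by rw [map_add, add_assoc]
      · calc a.2 + f (q2' + q1') = (a.2 + f q1') + f q2' := by
              rw [map_add, add_assoc, add_comm (f q2')]
          _ = (b.2 + f q2') + f q1 := by rw [e2, add_right_comm]
          _ = (c.2 + f q1) + f q2 := by rw [e4, add_right_comm]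
          _ = c.2 + f (q1 + q2) := by rw [map_add, add_assoc, add_comm (f q1)]
  add' := by
    rintro a b c d ⟨q1, q1', e1, e2⟩ ⟨q2, q2', e3, e4⟩
    refine ⟨q1 + q2, q1' + q2', ?_, ?_⟩
    · show (a.1 + c.1) + h (q1 + q2) = (b.1 + d.1) + h (q1' + q2')
      rw [map_add, map_add, add_add_add_comm a.1 c.1, e1, e3, add_add_add_comm]
    · show (a.2 + c.2) + f (q1' + q2') = (b.2 + d.2) + f (q1 + q2)
      rw [map_add, map_add, add_add_add_comm a.2 c.2, e2, e4, add_add_add_comm]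

/-- For an injective integral map `h : Q →+ P` of sharp cancellative monoids and any
`f : Q →+ R` with `R` sharp cancellative, the pushout congruence on `P ⊕ R` is exactly:
`(p, r) ∼ (p', r')` iff there are `q, q' ∈ Q` with `p + h q = p' + h q'` and
`r + f q' = r' + f q`.  (In particular the canonical map `P ⊕ R → P ⊕_Q R` to the
quotient by this congruence is surjective and identifies `(p, r)` with `(p', r')`
exactly when this condition holds.) -/
theorem pushout_con_explicit {Q P R : Type*} [AddCommMonoid Q] [AddCommMonoid P]
    [AddCommMonoid R]
    (hQsharp : Sharp Q) (hQcanc : Cancellative Q)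
    (hPsharp : Sharp P) (hPcanc : Cancellative P)
    (hRsharp : Sharp R) (hRcanc : Cancellative R)
    (h : Q →+ P) (hinj : Function.Injective h) (hint : IntegralHom h)
    (f : Q →+ R) :
    (∀ a b : P × R, pushCon h f a b ↔
      ∃ q q' : Q, a.1 + h q = b.1 + h q' ∧ a.2 + f q' = b.2 + f q) ∧
    Function.Surjective ((pushCon h f).mk' : P × R →+ (pushCon h f).Quotient) := by
  refine ⟨fun a b => ⟨fun hab => ?_, ?_⟩, AddCon.mk'_surjective⟩
  · have hle : pushCon h f ≤ expCon h f := by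
      apply AddCon.addConGen_le.mpr
      rintro x y ⟨q, rfl, rfl⟩
      exact ⟨0, q, by simp, by simp⟩
    exact hle hab
  · rintro ⟨q, q', e1, e2⟩
    obtain ⟨q3, q4, p0, hp1, hp2, hq⟩ := hint q q' a.1 b.1 e1
    -- a.1 = p0 + h q4, b.1 = p0 + h q3, q + q4 = q' + q3
    have key : ∀ (p : P) (r : R) (s : Q), pushCon h f (p + h s, r) (p, r + f s) := by
      intro p r s
      have g : pushCon h f (h s, 0) (0, f s) :=
        AddConGen.Rel.of _ _ ⟨s, rfl, rfl⟩
      have := (pushCon h f).add ((pushCon h f).refl (p, r)) g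
      simpa using this
    have hr : a.2 + f q4 = b.2 + f q3 := by
      apply hRcanc _ _ (f q')
      have : f q + f q4 = f q' + f q3 := by rw [← map_add, ← map_add, hq]
      calc a.2 + f q4 + f q' = a.2 + f q' + f q4 := by rw [add_right_comm]
        _ = b.2 + f q + f q4 := by rw [e2]
        _ = b.2 + (f q' + f q3) := by rw [add_assoc, this]
        _ = b.2 + f q3 + f q' := by rw [add_assoc, add_comm (f q')]
    have t1 : pushCon h f a (p0, a.2 + f q4) := by
      have := key p0 a.2 q4
      rwa [← hp1, ← Prod.mk.eta (p := a)] at this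
    have t2 : pushCon h f b (p0, b.2 + f q3) := by
      have := key p0 b.2 q3
      rwa [← hp2, ← Prod.mk.eta (p := b)] at this
    rw [hr] at t1
    exact t1.trans t2.symm
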